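/- Let n ≥ 1 and let R : (0,∞)ⁿ × (0,∞)ⁿ → ℝ satisfy R(α+β, x) = R(α,x)·R(β,x) for all multi-orders α,β ∈ (0,∞)ⁿ and all x ∈ (0,∞)ⁿ; suppose R(α^(j), x) = ∏ᵢ xᵢ^(−αᵢ^(j)) for n linearly independent vectors α^(1),…,α^(n) ∈ (0,∞)ⁿ; and suppose for each x the map α ↦ R(α,x) is continuous at one point of (0,∞)ⁿ. Then R(α,x) = ∏ᵢ xᵢ^(−αᵢ) for all α,x ∈ (0,∞)ⁿ. -/

import Mathlib

/-- Multidimensional Laplace-transform functional equation: the index law on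
the positive orthant, prescribed values at `n` linearly independent order
vectors, and continuity at one point force `R α x = ∏ i, (x i) ^ (-α i)`. -/
theorem laplace_functional_equation_multidim
    (n : ℕ) (hn : 1 ≤ n)
    (R : (Fin n → ℝ) → (Fin n → ℝ) → ℝ)
    (A : Fin n → (Fin n → ℝ))
    (hApos : ∀ j i, 0 < A j i)
    (hAind : LinearIndependent ℝ A)
    (hmul : ∀ α : Fin n → ℝ, (∀ i, 0 < α i) → ∀ β : Fin n → ℝ, (∀ i, 0 < β i) →
      ∀ x : Fin n → ℝ, (∀ i, 0 < x i) → R (α + β) x = R α x * R β x)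
    (hid : ∀ j, ∀ x : Fin n → ℝ, (∀ i, 0 < x i) →
      R (A j) x = ∏ i, (x i) ^ (-(A j i)))
    (hcont : ∀ x : Fin n → ℝ, (∀ i, 0 < x i) →
      ∃ α₀ ∈ {α : Fin n → ℝ | ∀ i, 0 < α i},
        ContinuousWithinAt (fun α => R α x) {α : Fin n → ℝ | ∀ i, 0 < α i} α₀) :
    ∀ α : Fin n → ℝ, (∀ i, 0 < α i) → ∀ x : Fin n → ℝ, (∀ i, 0 < x i) →
      R α x = ∏ i, (x i) ^ (-(α i)) := by
  intro α hα x hx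
  have hne : Nonempty (Fin n) := ⟨⟨0, hn⟩⟩
  set O : Set (Fin n → ℝ) := {a : Fin n → ℝ | ∀ i, 0 < a i} with hOdef
  have hOopen : IsOpen O := by
    have : O = Set.pi Set.univ (fun _ : Fin n => Set.Ioi (0:ℝ)) := by
      ext a; simp [hOdef, Set.mem_pi]
    rw [this]
    exact isOpen_set_pi Set.finite_univ fun i _ => isOpen_Ioi
  set f : (Fin n → ℝ) → ℝ := fun a => R a x with hfdef
  have hmulf : ∀ a : Fin n → ℝ, (∀ i, 0 < a i) → ∀ b : Fin n → ℝ, (∀ i, 0 < b i) →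
      f (a + b) = f a * f b := fun a ha b hb => hmul a ha b hb x hx
  -- positivity of the prescribed values
  have hfA : ∀ j, 0 < f (A j) := by
    intro j
    have : f (A j) = ∏ i, (x i) ^ (-(A j i)) := hid j x hx
    rw [this]
    exact Finset.prod_pos fun i _ => Real.rpow_pos_of_pos (hx i) _
  -- the sum of all A j
  set S : Fin n → ℝ := ∑ j, A j with hSdef
  have hS : ∀ i, 0 < S i := by
    intro i
    rw [hSdef, Finset.sum_apply]
    exact Finset.sum_pos (fun j _ => hApos j i) Finset.univ_nonempty
  -- f S > 0, by induction on finsets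
  have hfS : 0 < f S := by
    have key : ∀ s : Finset (Fin n), s.Nonempty →
        (∀ i, 0 < (∑ j ∈ s, A j) i) ∧ 0 < f (∑ j ∈ s, A j) := by
      intro s hs
      induction hs using Finset.Nonempty.cons_induction with
      | singleton j => simpa using ⟨fun i => hApos j i, hfA j⟩
      | cons j s hj hs ih =>
        rw [Finset.sum_cons]
        have h1 : ∀ i, 0 < (A j + ∑ k ∈ s, A k) i := fun i => by
          have := ih.1 i
          simpa using add_pos (hApos j i) this
        refine ⟨h1, ?_⟩
        rw [hmulf (A j) (hApos j) _ ih.1]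
        exact mul_pos (hfA j) ih.2
    have := (key Finset.univ Finset.univ_nonempty).2
    rwa [hSdef]
  -- index law for natural multiples of S
  have hstep : ∀ β : Fin n → ℝ, (∀ i, 0 < β i) → ∀ k : ℕ,
      f (β + k • S) = f β * (f S) ^ k := by
    intro β hβ k
    induction k with
    | zero => simp
    | succ k ih =>
      have hβk : ∀ i, 0 < (β + k • S) i := fun i => by
        have h0 : (0:ℝ) ≤ k • S i := by
          rw [nsmul_eq_mul]
          exact mul_nonneg (Nat.cast_nonneg k) (hS i).le
        have := add_pos_of_pos_of_nonneg (hβ i) h0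
        simpa using this
      have heq : β + (k+1) • S = (β + k • S) + S := by
        rw [succ_nsmul, add_assoc]
      rw [heq, hmulf _ hβk S hS, ih, pow_succ, mul_assoc]
  have hmemadd : ∀ a : Fin n → ℝ, (∀ i, 0 < a i) → ∀ k : ℕ, ∀ i, 0 < (a + k • S) i := by
    intro a ha k i
    have h0 : (0:ℝ) ≤ k • S i := by
      rw [nsmul_eq_mul]
      exact mul_nonneg (Nat.cast_nonneg k) (hS i).le
    have := add_pos_of_pos_of_nonneg (ha i) h0
    simpa using this
  -- positivity of f on the orthant
  have hfpos : ∀ a : Fin n → ℝ, (∀ i, 0 < a i) → 0 < f a := by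
    intro a ha
    have hhalf : ∀ i, 0 < ((2:ℝ)⁻¹ • a) i := fun i => by
      simp only [Pi.smul_apply, smul_eq_mul]
      exact mul_pos (by norm_num) (ha i)
    have hsum : (2:ℝ)⁻¹ • a + (2:ℝ)⁻¹ • a = a := by
      funext i; simp; ring
    have hnneg : 0 ≤ f a := by
      have := hmulf _ hhalf _ hhalf
      rw [hsum] at this
      rw [this]
      exact mul_self_nonneg _
    obtain ⟨k, hk⟩ : ∃ k : ℕ, ∀ i, a i < k * S i := by
      obtain ⟨k, hk⟩ := exists_nat_gt (Finset.univ.sup' Finset.univ_nonempty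
        (fun i : Fin n => a i / S i))
      refine ⟨k, fun i => ?_⟩
      have h1 : a i / S i ≤ Finset.univ.sup' Finset.univ_nonempty
          (fun i : Fin n => a i / S i) :=
        Finset.le_sup' (fun j : Fin n => a j / S j) (Finset.mem_univ i)
      have h2 := lt_of_le_of_lt h1 hk
      calc a i = (a i / S i) * S i := (div_mul_cancel₀ _ (hS i).ne').symm
        _ < k * S i := mul_lt_mul_of_pos_right h2 (hS i)
    have hdpos : ∀ i, 0 < ((k • S : Fin n → ℝ) - a) i := fun i => by
      have := hk i
      simp only [Pi.sub_apply, Pi.smul_apply, nsmul_eq_mul, Pi.mul_apply, Pi.natCast_apply]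
      linarith
    have hk1 : 1 ≤ k := by
      rcases Nat.eq_zero_or_pos k with h | h
      · exfalso
        have h2 := hk ⟨0, hn⟩
        rw [h] at h2
        simp at h2
        exact absurd h2 (not_lt.mpr (le_of_lt (ha _)))
      · exact h
    have heq : ((k • S : Fin n → ℝ) - a) + a = S + (k-1) • S := by
      funext i
      simp only [Pi.add_apply, Pi.sub_apply, Pi.smul_apply, nsmul_eq_mul, Pi.mul_apply,
        Pi.natCast_apply]
      rw [Nat.cast_sub hk1]
      push_cast
      ring
    have h2 : f (((k • S : Fin n → ℝ) - a) + a) = f ((k • S : Fin n → ℝ) - a) * f a :=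
      hmulf _ hdpos a ha
    have h3 : 0 < f (((k • S : Fin n → ℝ) - a) + a) := by
      rw [heq, hstep S hS (k-1)]
      positivity
    have hne0 : f a ≠ 0 := by
      intro h0
      rw [h2, h0, mul_zero] at h3
      exact lt_irrefl 0 h3
    exact lt_of_le_of_ne hnneg (Ne.symm hne0)
  -- the logarithm of f
  set L : (Fin n → ℝ) → ℝ := fun a => Real.log (f a) with hLdef
  have hLadd : ∀ a : Fin n → ℝ, (∀ i, 0 < a i) → ∀ b : Fin n → ℝ, (∀ i, 0 < b i) →
      L (a + b) = L a + L b := by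
    intro a ha b hb
    show Real.log (f (a+b)) = Real.log (f a) + Real.log (f b)
    rw [hmulf a ha b hb, Real.log_mul (hfpos a ha).ne' (hfpos b hb).ne']
  have hLstep : ∀ a : Fin n → ℝ, (∀ i, 0 < a i) → ∀ k : ℕ,
      L (a + k • S) = L a + k * L S := by
    intro a ha k
    show Real.log (f (a + k • S)) = Real.log (f a) + k * Real.log (f S)
    rw [hstep a ha k, Real.log_mul (hfpos a ha).ne' (pow_ne_zero k hfS.ne'), Real.log_pow]
  -- coherence of the shifted values
  have hco : ∀ a : Fin n → ℝ, ∀ k m : ℕ, (∀ i, 0 < (a + k • S) i) → (∀ i, 0 < (a + m • S) i) →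
      L (a + k • S) - k * L S = L (a + m • S) - m * L S := by
    have key : ∀ a : Fin n → ℝ, ∀ k m : ℕ, k ≤ m → (∀ i, 0 < (a + k • S) i) →
        L (a + m • S) = L (a + k • S) + (m - k : ℕ) * L S := by
      intro a k m hkm hk
      have heq : a + m • S = (a + k • S) + (m - k : ℕ) • S := by
        funext i
        simp only [Pi.add_apply, Pi.smul_apply, nsmul_eq_mul, Pi.mul_apply, Pi.natCast_apply]
        rw [Nat.cast_sub hkm]; ring
      rw [heq, hLstep _ hk]
    intro a k m hk hm
    rcases le_total k m with h | h
    · rw [key a k m h hk, Nat.cast_sub h]; ring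
    · rw [key a m k h hm, Nat.cast_sub h]; ring
  -- choice of shift making any vector positive
  have hexN : ∀ a : Fin n → ℝ, ∃ k : ℕ, ∀ i, 0 < (a + k • S) i := by
    intro a
    obtain ⟨k, hk⟩ := exists_nat_gt (Finset.univ.sup' Finset.univ_nonempty
      (fun i : Fin n => -a i / S i))
    refine ⟨k, fun i => ?_⟩
    have h1 : -a i / S i ≤ Finset.univ.sup' Finset.univ_nonempty
        (fun i : Fin n => -a i / S i) :=
      Finset.le_sup' (fun j : Fin n => -a j / S j) (Finset.mem_univ i)
    have h2 := lt_of_le_of_lt h1 hk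
    have h3 : -a i < k * S i := by
      calc -a i = (-a i / S i) * S i := (div_mul_cancel₀ _ (hS i).ne').symm
        _ < k * S i := mul_lt_mul_of_pos_right h2 (hS i)
    simp only [Pi.add_apply, Pi.smul_apply, nsmul_eq_mul, Pi.mul_apply, Pi.natCast_apply]
    linarith
  choose N hN using hexN
  set g : (Fin n → ℝ) → ℝ := fun a => L (a + N a • S) - N a * L S with hgdef
  -- g agrees with L on the orthant
  have hgL : ∀ a : Fin n → ℝ, (∀ i, 0 < a i) → g a = L a := by
    intro a ha
    have h0 : ∀ i, 0 < (a + (0:ℕ) • S) i := by simpa using ha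
    have h1 := hco a (N a) 0 (hN a) h0
    show L (a + N a • S) - N a * L S = L a
    rw [h1]; simp
  -- g is additive
  have hgadd : ∀ a b : Fin n → ℝ, g (a + b) = g a + g b := by
    intro a b
    have hab : ∀ i, 0 < (a + b + (N a + N b) • S) i := by
      intro i
      have h1 := hN a i
      have h2 := hN b i
      simp only [Pi.add_apply, Pi.smul_apply, nsmul_eq_mul, Pi.mul_apply,
        Pi.natCast_apply] at *
      push_cast
      linarith
    have hsplit : a + b + (N a + N b) • S = (a + N a • S) + (b + N b • S) := by
      funext i
      simp only [Pi.add_apply, Pi.smul_apply, nsmul_eq_mul, Pi.mul_apply, Pi.natCast_apply]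
      push_cast; ring
    have h3 : L (a + b + (N a + N b) • S) = L (a + N a • S) + L (b + N b • S) := by
      rw [hsplit]; exact hLadd _ (hN a) _ (hN b)
    have h4 := hco (a+b) (N (a+b)) (N a + N b) (hN (a+b)) hab
    show L (a + b + N (a+b) • S) - N (a+b) * L S
      = (L (a + N a • S) - N a * L S) + (L (b + N b • S) - N b * L S)
    rw [h4, h3]; push_cast; ring
  have hg0 : g 0 = 0 := by
    have h := hgadd 0 0
    rw [add_zero] at h
    linarith
  set G : (Fin n → ℝ) →+ ℝ := { toFun := g, map_zero' := hg0, map_add' := hgadd } with hGdef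
  -- continuity of G
  obtain ⟨α₀, hα₀, hcw⟩ := hcont x hx
  have hα₀' : ∀ i, 0 < α₀ i := hα₀
  have hfc : ContinuousAt f α₀ := hcw.continuousAt (hOopen.mem_nhds hα₀)
  have hLc : ContinuousAt L α₀ :=
    (Real.continuousAt_log (hfpos α₀ hα₀').ne').comp hfc
  have hgc : ContinuousAt g α₀ := by
    apply hLc.congr
    filter_upwards [hOopen.mem_nhds hα₀] with a ha
    exact (hgL a ha).symm
  have hGc0 : ContinuousAt G 0 := by
    have htr : ContinuousAt (fun a : Fin n → ℝ => a + α₀) 0 :=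
      (continuous_id.add continuous_const).continuousAt
    have h1 : ContinuousAt (fun a : Fin n → ℝ => g (a + α₀) - g α₀) 0 :=
      (ContinuousAt.comp (by simpa using hgc) htr).sub continuousAt_const
    have h2 : (fun a : Fin n → ℝ => g (a + α₀) - g α₀) = g := by
      funext a; rw [hgadd]; ring
    rw [h2] at h1
    exact h1
  have hGc : Continuous G := continuous_of_continuousAt_zero G hGc0
  set φ : (Fin n → ℝ) →L[ℝ] ℝ := G.toRealLinearMap hGc with hφdef
  set ψ : (Fin n → ℝ) →ₗ[ℝ] ℝ :=
    { toFun := fun a => ∑ i, a i * (-Real.log (x i)),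
      map_add' := by
        intro a b
        simp only [Pi.add_apply, add_mul]
        rw [Finset.sum_add_distrib],
      map_smul' := by
        intro c a
        simp only [Pi.smul_apply, smul_eq_mul, RingHom.id_apply]
        rw [Finset.mul_sum]
        exact Finset.sum_congr rfl fun i _ => by ring } with hψdef
  -- value of L at the A j
  have hLA : ∀ j, L (A j) = ∑ i, (A j i) * (-Real.log (x i)) := by
    intro j
    show Real.log (f (A j)) = _
    have hfAj : f (A j) = ∏ i, (x i) ^ (-(A j i)) := hid j x hx
    rw [hfAj, Real.log_prod (fun i _ => (Real.rpow_pos_of_pos (hx i) _).ne')]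
    refine Finset.sum_congr rfl fun i _ => ?_
    rw [Real.log_rpow (hx i)]
    ring
  -- the basis and equality of linear maps
  let b : Module.Basis (Fin n) ℝ (Fin n → ℝ) :=
    basisOfLinearIndependentOfCardEqFinrank hAind (by simp)
  have hb : ⇑b = A := coe_basisOfLinearIndependentOfCardEqFinrank hAind _
  have hφψ : (φ : (Fin n → ℝ) →ₗ[ℝ] ℝ) = ψ := by
    apply b.ext
    intro j
    have hbj : b j = A j := congrFun hb j
    rw [hbj]
    have h1 : (φ : (Fin n → ℝ) →ₗ[ℝ] ℝ) (A j) = g (A j) := rfl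
    rw [h1, hgL (A j) (hApos j), hLA j]
    rfl
  -- conclusion
  have hgα : g α = ∑ i, α i * (-Real.log (x i)) := by
    have h1 : g α = (φ : (Fin n → ℝ) →ₗ[ℝ] ℝ) α := rfl
    rw [h1, hφψ]
    rfl
  have hLα : L α = ∑ i, α i * (-Real.log (x i)) := by
    rw [← hgL α hα, hgα]
  have hfα : f α = Real.exp (∑ i, α i * (-Real.log (x i))) := by
    rw [← hLα]
    exact (Real.exp_log (hfpos α hα)).symm
  show f α = _
  rw [hfα, Real.exp_sum]
  refine Finset.prod_congr rfl fun i _ => ?_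
  rw [Real.rpow_def_of_pos (hx i)]
  ring_nf
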